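/- Let n:(0,1)→ℝ be a continuous Seiffert function such that u ↦ n(u)/u is convex and n(u)/u → 1 as u → 0. Then for all z ∈ (0,1): 2n(z/2) ≤ ∫₀^z n(u)/u du ≤ (z + n(z))/2. -/

import Mathlib

open Set MeasureTheory intervalIntegral Filter

theorem stmt_14 (n : ℝ → ℝ) (hc : ContinuousOn n (Set.Ioo 0 1))
    (hs : ∀ z ∈ Set.Ioo (0:ℝ) 1, z / (1 + z) ≤ n z ∧ n z ≤ z / (1 - z))
    (hconv : ConvexOn ℝ (Set.Ioo 0 1) (fun u => n u / u))
    (hlim : Filter.Tendsto (fun u => n u / u) (nhdsWithin 0 (Set.Ioi 0)) (nhds 1)) :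
    ∀ z ∈ Set.Ioo (0:ℝ) 1,
      2 * n (z / 2) ≤ ∫ u in (0:ℝ)..z, n u / u ∧
      (∫ u in (0:ℝ)..z, n u / u) ≤ (z + n z) / 2 := by
  intro z hz
  obtain ⟨hz0, hz1⟩ := hz
  set g : ℝ → ℝ := fun u => n u / u with hg
  -- continuity of g on Ioo 0 1
  have hgc : ContinuousOn g (Set.Ioo 0 1) :=
    hc.div continuousOn_id (fun x hx => ne_of_gt hx.1)
  have hsub : Set.Ioo (0:ℝ) z ⊆ Set.Ioo (0:ℝ) 1 :=
    Set.Ioo_subset_Ioo le_rfl hz1.le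
  -- bounds on g
  have hgb : ∀ u ∈ Set.Ioo (0:ℝ) z, ‖g u‖ ≤ 1 / (1 - z) := by
    intro u hu
    have hu1 : u ∈ Set.Ioo (0:ℝ) 1 := hsub hu
    obtain ⟨h1, h2⟩ := hs u hu1
    have hup : (0:ℝ) < u := hu.1
    have h1z : (0:ℝ) < 1 - z := by linarith
    have h1u : (0:ℝ) < 1 - u := by linarith [hu1.2]
    have hgpos : 0 ≤ g u := by
      have : 0 ≤ n u := le_trans (by positivity) h1
      exact div_nonneg this hup.le
    rw [Real.norm_eq_abs, abs_of_nonneg hgpos]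
    have : g u ≤ 1 / (1 - u) := by
      rw [hg]
      rw [div_le_div_iff₀ hup h1u]
      calc n u * (1 - u) ≤ u / (1 - u) * (1 - u) := by nlinarith
        _ = u := by field_simp
        _ = 1 * u := (one_mul u).symm
    refine this.trans ?_
    apply div_le_div_of_nonneg_left one_pos.le h1z
    linarith [hu.2]
  -- integrability of g on Ioo 0 z
  have hmeas : MeasurableSet (Set.Ioo (0:ℝ) z) := measurableSet_Ioo
  have hvol : MeasureTheory.volume (Set.Ioo (0:ℝ) z) < ⊤ := measure_Ioo_lt_top
  have hInt : IntegrableOn g (Set.Ioo 0 z) := by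
    apply Integrable.mono' (g := fun _ => 1/(1-z))
      (integrableOn_const hvol.ne)
      ((hgc.mono hsub).aestronglyMeasurable hmeas)
    filter_upwards [ae_restrict_mem hmeas] with u hu using hgb u hu
  have hIntR : IntegrableOn (fun u => g (z - u)) (Set.Ioo 0 z) := by
    have hmap : ∀ u ∈ Set.Ioo (0:ℝ) z, z - u ∈ Set.Ioo (0:ℝ) z := by
      intro u hu; exact ⟨by linarith [hu.2], by linarith [hu.1]⟩
    apply Integrable.mono' (g := fun _ => 1/(1-z))
      (integrableOn_const hvol.ne)
    · exact (((hgc.mono hsub).comp ((continuousOn_const.sub continuousOn_id)) hmap).aestronglyMeasurable hmeas)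
    · filter_upwards [ae_restrict_mem hmeas] with u hu using hgb _ (hmap u hu)
  -- rewrite interval integral as set integral on Ioo
  have hivol : (∫ u in (0:ℝ)..z, g u) = ∫ u in Set.Ioo (0:ℝ) z, g u := by
    rw [intervalIntegral.integral_of_le hz0.le, MeasureTheory.integral_Ioc_eq_integral_Ioo]
  constructor
  · -- lower bound
    have hmid : ∀ u ∈ Set.Ioo (0:ℝ) z, 2 * g (z/2) ≤ g u + g (z - u) := by
      intro u hu
      have hu1 : u ∈ Set.Ioo (0:ℝ) 1 := hsub hu
      have hzu1 : z - u ∈ Set.Ioo (0:ℝ) 1 := hsub ⟨by linarith [hu.2], by linarith [hu.1]⟩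
      have := hconv.2 hu1 hzu1 (by norm_num : (0:ℝ) ≤ 1/2) (by norm_num : (0:ℝ) ≤ 1/2) (by norm_num)
      simp only [smul_eq_mul] at this
      have heq : (1/2 : ℝ) * u + (1/2 : ℝ) * (z - u) = z / 2 := by ring
      rw [heq] at this
      linarith
    have h1 : ∫ u in Set.Ioo (0:ℝ) z, (2 * g (z/2)) ≤ ∫ u in Set.Ioo (0:ℝ) z, (g u + g (z - u)) :=
      setIntegral_mono_on (integrableOn_const hvol.ne) (hInt.add hIntR) hmeas hmid
    have h2 : (∫ u in Set.Ioo (0:ℝ) z, (g u + g (z - u)))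
        = (∫ u in Set.Ioo (0:ℝ) z, g u) + ∫ u in Set.Ioo (0:ℝ) z, g (z - u) :=
      integral_add hInt hIntR
    have h3 : (∫ u in Set.Ioo (0:ℝ) z, g (z - u)) = ∫ u in Set.Ioo (0:ℝ) z, g u := by
      have : (∫ u in (0:ℝ)..z, g (z - u)) = ∫ u in (z - z)..(z - 0), g u :=
        intervalIntegral.integral_comp_sub_left g z
      rw [intervalIntegral.integral_of_le hz0.le, MeasureTheory.integral_Ioc_eq_integral_Ioo] at this
      simp only [sub_self, sub_zero] at this
      rw [intervalIntegral.integral_of_le hz0.le, MeasureTheory.integral_Ioc_eq_integral_Ioo] at this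
      exact this
    have h4 : ∫ u in Set.Ioo (0:ℝ) z, (2 * g (z/2)) = z * (2 * g (z/2)) := by
      rw [setIntegral_const]
      rw [measureReal_def, Real.volume_Ioo]
      simp [ENNReal.toReal_ofReal hz0.le, smul_eq_mul]
    have h5 : z * (2 * g (z/2)) = 2 * (2 * n (z/2)) := by
      have : g (z/2) = n (z/2) / (z/2) := rfl
      rw [this]
      field_simp
    have : 2 * (2 * n (z/2)) ≤ 2 * ∫ u in Set.Ioo (0:ℝ) z, g u := by
      rw [← h5, ← h4]
      calc ∫ u in Set.Ioo (0:ℝ) z, (2 * g (z/2))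
          ≤ ∫ u in Set.Ioo (0:ℝ) z, (g u + g (z - u)) := h1
        _ = 2 * ∫ u in Set.Ioo (0:ℝ) z, g u := by rw [h2, h3]; ring
    rw [hivol]
    linarith
  · -- upper bound: chord
    have hchord : ∀ u ∈ Set.Ioo (0:ℝ) z, g u ≤ (z - u)/z + u/z * g z := by
      intro u hu
      obtain ⟨hu0, huz⟩ := hu
      have hne : (Filter.NeBot (nhdsWithin (0:ℝ) (Set.Ioo 0 u))) := left_nhdsWithin_Ioo_neBot hu0
      -- tendsto of the convex combination bound
      have htA : Filter.Tendsto (fun ε => (z - u)/(z - ε)) (nhdsWithin (0:ℝ) (Set.Ioo 0 u))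
          (nhds ((z - u)/z)) := by
        apply Filter.Tendsto.mono_left _ nhdsWithin_le_nhds
        have : Filter.Tendsto (fun ε : ℝ => z - ε) (nhds 0) (nhds (z - 0)) :=
          (tendsto_const_nhds.sub Filter.tendsto_id)
        rw [sub_zero] at this
        exact Filter.Tendsto.div tendsto_const_nhds this (ne_of_gt hz0)
      have htB : Filter.Tendsto (fun ε => (u - ε)/(z - ε)) (nhdsWithin (0:ℝ) (Set.Ioo 0 u))
          (nhds (u/z)) := by
        apply Filter.Tendsto.mono_left _ nhdsWithin_le_nhds
        have h1 : Filter.Tendsto (fun ε : ℝ => u - ε) (nhds 0) (nhds (u - 0)) :=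
          (tendsto_const_nhds.sub Filter.tendsto_id)
        have h2 : Filter.Tendsto (fun ε : ℝ => z - ε) (nhds 0) (nhds (z - 0)) :=
          (tendsto_const_nhds.sub Filter.tendsto_id)
        rw [sub_zero] at h1 h2
        exact h1.div h2 (ne_of_gt hz0)
      have htg : Filter.Tendsto g (nhdsWithin (0:ℝ) (Set.Ioo 0 u)) (nhds 1) :=
        hlim.mono_left (nhdsWithin_mono 0 (fun x hx => hx.1))
      have htF : Filter.Tendsto (fun ε => (z - u)/(z - ε) * g ε + (u - ε)/(z - ε) * g z)
          (nhdsWithin (0:ℝ) (Set.Ioo 0 u)) (nhds ((z - u)/z * 1 + u/z * g z)) :=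
        (htA.mul htg).add (htB.mul tendsto_const_nhds)
      have hev : ∀ᶠ ε in nhdsWithin (0:ℝ) (Set.Ioo 0 u),
          g u ≤ (z - u)/(z - ε) * g ε + (u - ε)/(z - ε) * g z := by
        filter_upwards [self_mem_nhdsWithin] with ε hε
        obtain ⟨hε0, hεu⟩ := hε
        have hε1 : ε ∈ Set.Ioo (0:ℝ) 1 := ⟨hε0, by linarith⟩
        have hz1' : z ∈ Set.Ioo (0:ℝ) 1 := ⟨hz0, hz1⟩
        have hzε : (0:ℝ) < z - ε := by linarith
        have ha : (0:ℝ) ≤ (z - u)/(z - ε) := div_nonneg (by linarith) hzε.le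
        have hb : (0:ℝ) ≤ (u - ε)/(z - ε) := div_nonneg (by linarith) hzε.le
        have hab : (z - u)/(z - ε) + (u - ε)/(z - ε) = 1 := by
          field_simp
          ring
        have := hconv.2 hε1 hz1' ha hb hab
        simp only [smul_eq_mul] at this
        have heq : (z - u)/(z - ε) * ε + (u - ε)/(z - ε) * z = u := by
          field_simp; ring
        rw [heq] at this
        exact this
      exact ge_of_tendsto htF hev |>.trans_eq (by ring)
    have h1 : (∫ u in Set.Ioo (0:ℝ) z, g u) ≤ ∫ u in Set.Ioo (0:ℝ) z, ((z - u)/z + u/z * g z) := by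
      apply setIntegral_mono_on hInt _ hmeas hchord
      apply Integrable.mono' (g := fun _ => 1 + |g z|)
        (integrableOn_const hvol.ne)
      · apply ContinuousOn.aestronglyMeasurable _ hmeas
        apply ContinuousOn.add
        · exact (continuousOn_const.sub continuousOn_id).div continuousOn_const (fun x _ => ne_of_gt hz0)
        · exact (continuousOn_id.div continuousOn_const (fun x _ => ne_of_gt hz0)).mul continuousOn_const
      · filter_upwards [ae_restrict_mem hmeas] with u hu
        have h1 : |z - u| ≤ |z| := by
          rw [abs_of_nonneg (by linarith [hu.2] : (0:ℝ) ≤ z - u), abs_of_nonneg hz0.le]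
          linarith [hu.1]
        have h2 : |u| ≤ |z| := by
          rw [abs_of_nonneg hu.1.le, abs_of_nonneg hz0.le]; exact hu.2.le
        have e1 : |(z - u)/z| ≤ 1 := by
          rw [abs_div, abs_of_nonneg hz0.le, div_le_one hz0, abs_of_nonneg (by linarith [hu.2] : (0:ℝ) ≤ z - u)]
          linarith [hu.1]
        have e2 : |u/z| ≤ 1 := by
          rw [abs_div, abs_of_nonneg hz0.le, div_le_one hz0, abs_of_nonneg hu.1.le]
          exact hu.2.le
        calc ‖(z - u)/z + u/z * g z‖ ≤ |(z-u)/z| + |u/z * g z| := abs_add_le _ _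
          _ = |(z-u)/z| + |u/z| * |g z| := by rw [abs_mul]
          _ ≤ 1 + 1 * |g z| := by
              have := abs_nonneg (g z)
              have := abs_nonneg ((z-u)/z)
              have := abs_nonneg (u/z)
              nlinarith
          _ = 1 + |g z| := by ring
    have hcomp : (∫ u in Set.Ioo (0:ℝ) z, ((z - u)/z + u/z * g z)) = (z + n z)/2 := by
      have heq : ∀ u : ℝ, (z - u)/z + u/z * g z = 1 + ((g z - 1)/z) * u := by
        intro u; field_simp; ring
      rw [← MeasureTheory.integral_Ioc_eq_integral_Ioo, ← intervalIntegral.integral_of_le hz0.le]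
      simp only [heq]
      rw [intervalIntegral.integral_add intervalIntegrable_const
        ((intervalIntegral.intervalIntegrable_id).const_mul _)]
      rw [intervalIntegral.integral_const, intervalIntegral.integral_const_mul,
        integral_id]
      have hgz : g z = n z / z := rfl
      rw [hgz]
      field_simp
      ring
    rw [hivol]
    exact h1.trans hcomp.le
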